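/- Pointwise variational inequality limit: suppose ρₙ → ρ uniformly with |ρₙ| ≤ 1, ξₙ → ξ weakly in L²(Q), ξₙ = φ(αₙ)·h'(ρₙ) pointwise with h convex nonnegative on [-1,1], φ(αₙ) → 0, and 0 ≤ ∫ φ(αₙ) h(ρₙ) ≤ ∫ φ(αₙ) h(z) + ∫ ξₙ (ρₙ - z) for all measurable z with |z| ≤ 1. Then ∫ ξ·(ρ - z) ≥ 0 for all such z. -/

import Mathlib

open MeasureTheory Filter ENNReal

theorem variational_inequality_limit
    {Q : Type*} [MeasurableSpace Q] (μ : Measure Q) [IsFiniteMeasure μ]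
    (h : ℝ → ℝ) (hconv : ConvexOn ℝ (Set.Icc (-1 : ℝ) 1) h)
    (hcont : ContinuousOn h (Set.Icc (-1 : ℝ) 1))
    (hnonneg : ∀ r ∈ Set.Icc (-1 : ℝ) 1, 0 ≤ h r)
    (φ : ℕ → ℝ) (hφpos : ∀ n, 0 < φ n) (hφ : Tendsto φ atTop (nhds 0))
    (ρn : ℕ → Q → ℝ) (ξn : ℕ → Q → ℝ) (ρ ξ : Q → ℝ)
    (hρn : ∀ n, MemLp (ρn n) 2 μ) (hξn : ∀ n, MemLp (ξn n) 2 μ)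
    (hρ : MemLp ρ 2 μ) (hξ : MemLp ξ 2 μ)
    (hρbd : ∀ n, ∀ x, |ρn n x| ≤ 1)
    (hρunif : TendstoUniformly ρn ρ atTop)
    (hweak : ∀ ψ : Q → ℝ, MemLp ψ 2 μ →
      Tendsto (fun n => ∫ x, ξn n x * ψ x ∂μ) atTop (nhds (∫ x, ξ x * ψ x ∂μ)))
    (hineq : ∀ n, ∀ z : Q → ℝ, Measurable z → (∀ x, |z x| ≤ 1) →
      0 ≤ ∫ x, φ n * h (ρn n x) ∂μ ∧
      ∫ x, φ n * h (ρn n x) ∂μ ≤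
        ∫ x, φ n * h (z x) ∂μ + ∫ x, ξn n x * (ρn n x - z x) ∂μ) :
    ∀ z : Q → ℝ, Measurable z → (∀ x, |z x| ≤ 1) →
      0 ≤ ∫ x, ξ x * (ρ x - z x) ∂μ := by
  intro z hzm hzb
  -- Lp elements
  set E : ℕ → Lp ℝ 2 μ := fun n => (hξn n).toLp (ξn n) with hE
  set Rn : ℕ → Lp ℝ 2 μ := fun n => (hρn n).toLp (ρn n) with hRn
  set R : Lp ℝ 2 μ := hρ.toLp ρ with hRdef
  -- uniform bound on ‖ξn‖₂ via Banach–Steinhaus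
  have hbd : ∃ C, ∀ n, ‖E n‖ ≤ C := by
    have hbs : ∃ C, ∀ n, ‖innerSL ℝ (E n)‖ ≤ C := by
      apply banach_steinhaus (𝕜 := ℝ) (𝕜₂ := ℝ)
      intro ψ
      have hψ : MemLp (⇑ψ) 2 μ := Lp.memLp ψ
      have hconvseq : Tendsto (fun n => ∫ x, ξn n x * ψ x ∂μ) atTop
          (nhds (∫ x, ξ x * ψ x ∂μ)) := hweak _ hψ
      have heq : ∀ n, (innerSL ℝ (E n)) ψ = ∫ x, ξn n x * ψ x ∂μ := by
        intro n
        have : (innerSL ℝ (E n)) ψ = ∫ x, (E n) x * ψ x ∂μ := by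
          simp only [innerSL_apply_apply, L2.inner_def, RCLike.inner_apply, conj_trivial]
          exact integral_congr_ae (ae_of_all _ fun _ => mul_comm _ _)
        rw [this]
        refine integral_congr_ae ?_
        filter_upwards [(hξn n).coeFn_toLp] with x hx
        rw [hx]
      have : Tendsto (fun n => ‖(innerSL ℝ (E n)) ψ‖) atTop
          (nhds ‖∫ x, ξ x * ψ x ∂μ‖) := by
        simp_rw [heq]; exact hconvseq.norm
      obtain ⟨C, hC⟩ := this.bddAbove_range
      exact ⟨C, fun n => hC ⟨n, rfl⟩⟩
    obtain ⟨C, hC⟩ := hbs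
    exact ⟨C, fun n => by rw [← innerSL_apply_norm (𝕜 := ℝ) (E n)]; exact hC n⟩
  obtain ⟨C, hC⟩ := hbd
  -- ρn → ρ in L²
  have hRtend : Tendsto (fun n => ‖Rn n - R‖) atTop (nhds 0) := by
    rw [Metric.tendsto_atTop]
    intro ε hε
    set c : ℝ := ((μ Set.univ) ^ (2 : ℝ≥0∞).toReal⁻¹).toReal with hc
    have hcnn : 0 ≤ c := ENNReal.toReal_nonneg
    have hδ : (0 : ℝ) < ε / (c + 1) := by positivity
    obtain ⟨N, hN⟩ := eventually_atTop.1
      ((Metric.tendstoUniformly_iff.1 hρunif) (ε / (c + 1)) hδ)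
    refine ⟨N, fun n hn => ?_⟩
    have hb : ∀ᵐ x ∂μ, ‖ρn n x - ρ x‖ ≤ ε / (c + 1) := by
      refine ae_of_all _ fun x => ?_
      have := hN n hn x
      rw [Real.dist_eq] at this
      rw [Real.norm_eq_abs, abs_sub_comm]
      exact this.le
    have hsn : eLpNorm (fun x => ρn n x - ρ x) 2 μ ≤
        (μ Set.univ) ^ (2 : ℝ≥0∞).toReal⁻¹ * ENNReal.ofReal (ε / (c + 1)) :=
      eLpNorm_le_of_ae_bound hb
    have hnorm : ‖Rn n - R‖ = (eLpNorm (fun x => ρn n x - ρ x) 2 μ).toReal := by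
      rw [hRn, hRdef, ← MemLp.toLp_sub (hρn n) hρ, Lp.norm_toLp]
      rfl
    have hfin : (μ Set.univ) ^ (2 : ℝ≥0∞).toReal⁻¹ ≠ ⊤ :=
      (ENNReal.rpow_lt_top_of_nonneg (by positivity) (measure_ne_top μ _)).ne
    have : ‖Rn n - R‖ ≤ c * (ε / (c + 1)) := by
      rw [hnorm]
      calc (eLpNorm (fun x => ρn n x - ρ x) 2 μ).toReal
          ≤ ((μ Set.univ) ^ (2 : ℝ≥0∞).toReal⁻¹ * ENNReal.ofReal (ε / (c + 1))).toReal := by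
            apply ENNReal.toReal_mono _ hsn
            exact ENNReal.mul_ne_top hfin ENNReal.ofReal_ne_top
        _ = c * (ε / (c + 1)) := by
            rw [ENNReal.toReal_mul, ENNReal.toReal_ofReal hδ.le]
    rw [Real.dist_eq, sub_zero, abs_of_nonneg (norm_nonneg _)]
    calc ‖Rn n - R‖ ≤ c * (ε / (c + 1)) := this
      _ < ε := by
          rw [mul_div_assoc']
          rw [div_lt_iff₀ (by positivity)]
          nlinarith
  -- z is in L²
  have hz : MemLp z 2 μ :=
    MemLp.of_bound hzm.aestronglyMeasurable 1 (ae_of_all _ fun x => by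
      rw [Real.norm_eq_abs]; exact hzb x)
  -- decomposition of the integral
  have hdecomp : ∀ n, ∫ x, ξn n x * (ρn n x - z x) ∂μ =
      (inner ℝ (E n) (Rn n - R) : ℝ) + ∫ x, ξn n x * (ρ x - z x) ∂μ := by
    intro n
    have hinner : (inner ℝ (E n) (Rn n - R) : ℝ) = ∫ x, ξn n x * (ρn n x - ρ x) ∂μ := by
      rw [L2.inner_def]
      refine integral_congr_ae ?_
      filter_upwards [(hξn n).coeFn_toLp, Lp.coeFn_sub (Rn n) R, (hρn n).coeFn_toLp,
        hρ.coeFn_toLp] with x h1 h2 h3 h4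
      simp only [RCLike.inner_apply, conj_trivial]
      rw [h1, h2, Pi.sub_apply, h3, h4, mul_comm]
    rw [hinner]
    have hint1 : Integrable (fun x => ξn n x * (ρn n x - ρ x)) μ := by
      refine (L2.integrable_inner (𝕜 := ℝ) (E n) (Rn n - R)).congr ?_
      filter_upwards [(hξn n).coeFn_toLp, Lp.coeFn_sub (Rn n) R, (hρn n).coeFn_toLp,
        hρ.coeFn_toLp] with x h1 h2 h3 h4
      simp only [RCLike.inner_apply, conj_trivial]
      rw [h1, h2, Pi.sub_apply, h3, h4, mul_comm]
    have hint2 : Integrable (fun x => ξn n x * (ρ x - z x)) μ := by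
      refine (L2.integrable_inner (𝕜 := ℝ) (E n) (hρ.toLp ρ - hz.toLp z)).congr ?_
      filter_upwards [(hξn n).coeFn_toLp, Lp.coeFn_sub (hρ.toLp ρ) (hz.toLp z),
        hρ.coeFn_toLp, hz.coeFn_toLp] with x h1 h2 h3 h4
      simp only [RCLike.inner_apply, conj_trivial]
      rw [h1, h2, Pi.sub_apply, h3, h4, mul_comm]
    rw [← integral_add hint1 hint2]
    congr 1
    ext x
    ring
  -- the main convergence
  have hmain : Tendsto (fun n => ∫ x, ξn n x * (ρn n x - z x) ∂μ) atTop
      (nhds (∫ x, ξ x * (ρ x - z x) ∂μ)) := by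
    have h1 : Tendsto (fun n => (inner ℝ (E n) (Rn n - R) : ℝ)) atTop (nhds 0) := by
      refine squeeze_zero_norm (a := fun n => C * ‖Rn n - R‖) (fun n => ?_) ?_
      ·
        calc ‖(inner ℝ (E n) (Rn n - R) : ℝ)‖ ≤ ‖E n‖ * ‖Rn n - R‖ := norm_inner_le_norm _ _
          _ ≤ C * ‖Rn n - R‖ :=
              mul_le_mul_of_nonneg_right (hC n) (norm_nonneg _)
      · have := hRtend.const_mul C
        simpa using this
    have h2 : Tendsto (fun n => ∫ x, ξn n x * (ρ x - z x) ∂μ) atTop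
        (nhds (∫ x, ξ x * (ρ x - z x) ∂μ)) := hweak _ (hρ.sub hz)
    have := h1.add h2
    rw [zero_add] at this
    refine this.congr fun n => (hdecomp n).symm
  -- the lower bound
  have hlb : ∀ n, -(φ n * ∫ x, h (z x) ∂μ) ≤ ∫ x, ξn n x * (ρn n x - z x) ∂μ := by
    intro n
    obtain ⟨h0, h1⟩ := hineq n z hzm hzb
    have : ∫ x, φ n * h (z x) ∂μ = φ n * ∫ x, h (z x) ∂μ := integral_const_mul _ _
    linarith [this ▸ (h0.trans h1)]
  have hlbtend : Tendsto (fun n => -(φ n * ∫ x, h (z x) ∂μ)) atTop (nhds 0) := by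
    have := (hφ.mul_const (∫ x, h (z x) ∂μ)).neg
    simpa using this
  exact le_of_tendsto_of_tendsto' hlbtend hmain hlb
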